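/- Let C = {i·p^j : i ∈ S, 0 ≤ j ≤ a-1}, S a finite set of positive integers coprime to p, and suppose ν is the unique element of S of maximal base-p digit sum. If M_C(N) = s_p(N)/s_p(ν), then there exists w < p^a with N = ν·w and s_p(N) = s_p(ν)·s_p(w) (i.e., the product ν·w is carry-free). -/

import Mathlib

/-- Sum of the base-`p` digits of `n`. -/
def digitSum (p n : ℕ) : ℕ := (Nat.digits p n).sum

lemma ds_rec {p : ℕ} (hp : 1 < p) {n : ℕ} (hn : n ≠ 0) :
    digitSum p n = n % p + digitSum p (n / p) := by
  unfold digitSum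
  rw [Nat.digits_def' hp (Nat.pos_of_ne_zero hn), List.sum_cons]

lemma ds_le_self (p n : ℕ) : digitSum p n ≤ n := Nat.digit_sum_le p n

lemma ds_one {p : ℕ} (hp : 1 < p) : digitSum p 1 = 1 := by
  rw [ds_rec hp one_ne_zero, Nat.mod_eq_of_lt hp, Nat.div_eq_of_lt hp]
  simp [digitSum]

lemma ds_add_le {p : ℕ} (hp : 1 < p) (x y : ℕ) :
    digitSum p (x + y) ≤ digitSum p x + digitSum p y := by
  have H : ∀ n x y, x + y ≤ n → digitSum p (x + y) ≤ digitSum p x + digitSum p y := by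
    intro n
    induction n with
    | zero =>
      intro x y h
      have hx : x = 0 := by omega
      have hy : y = 0 := by omega
      simp [hx, hy]
    | succ n ih =>
      intro x y h
      rcases Nat.eq_zero_or_pos x with hx | hx; · simp [hx]
      rcases Nat.eq_zero_or_pos y with hy | hy; · simp [hy]
      have hp0 : 0 < p := by omega
      obtain ⟨c, hc⟩ : ∃ c, (x % p + y % p) / p = c := ⟨_, rfl⟩
      have hc1 : c ≤ 1 := by
        have h1 := Nat.mod_lt x hp0; have h2 := Nat.mod_lt y hp0
        rw [← hc]; exact Nat.lt_succ_iff.mp (Nat.div_lt_of_lt_mul (by omega))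
      have hdiv : (x + y) / p = x / p + y / p + c := by
        conv_lhs => rw [← Nat.div_add_mod x p, ← Nat.div_add_mod y p]
        rw [show p * (x/p) + x%p + (p * (y/p) + y%p) = p * (x/p + y/p) + (x%p+y%p) by ring,
          Nat.mul_add_div hp0, hc]
      have key1 : digitSum p ((x + y) / p) ≤ digitSum p (x/p) + digitSum p (y/p) + digitSum p c := by
        rw [hdiv]
        have hxlt : x / p < x := Nat.div_lt_self hx hp
        have hylt : y / p < y := Nat.div_lt_self hy hp
        calc digitSum p (x/p + y/p + c) ≤ digitSum p (x/p + y/p) + digitSum p c :=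
              ih _ _ (by omega)
          _ ≤ digitSum p (x/p) + digitSum p (y/p) + digitSum p c := by
              have := ih (x/p) (y/p) (by omega)
              omega
      have hdsc : digitSum p c = c := by
        interval_cases c
        · simp [digitSum]
        · exact ds_one hp
      have hmod : (x + y) % p + c ≤ x % p + y % p := by
        have e1 : (x + y) % p = (x % p + y % p) % p := by rw [Nat.add_mod]
        have e2 := Nat.div_add_mod (x % p + y % p) p
        rw [hc] at e2
        have e3 : c ≤ p * c := Nat.le_mul_of_pos_left c hp0
        omega
      rw [ds_rec hp (by omega), ds_rec hp (by omega : x ≠ 0), ds_rec hp (by omega : y ≠ 0)]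
      omega
  exact H (x + y) x y le_rfl

lemma ds_sum_le {p : ℕ} (hp : 1 < p) {s : Finset ℕ} (f : ℕ → ℕ) :
    digitSum p (∑ i ∈ s, f i) ≤ ∑ i ∈ s, digitSum p (f i) := by
  classical
  induction s using Finset.induction_on with
  | empty => simp [digitSum]
  | insert _ _ h ih =>
    rw [Finset.sum_insert h, Finset.sum_insert h]
    exact le_trans (ds_add_le hp _ _) (by omega)

lemma ds_smul_le {p : ℕ} (hp : 1 < p) (c x : ℕ) :
    digitSum p (c * x) ≤ c * digitSum p x := by
  induction c with
  | zero => simp [digitSum]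
  | succ c ih =>
    rw [Nat.succ_mul, Nat.succ_mul]
    exact le_trans (ds_add_le hp _ _) (by omega)

lemma ds_mul_pow {p : ℕ} (hp : 1 < p) (n k : ℕ) :
    digitSum p (n * p ^ k) = digitSum p n := by
  rcases Nat.eq_zero_or_pos n with hn | hn; · simp [hn]
  induction k with
  | zero => simp
  | succ k ih =>
    have hnp : n * p ^ (k+1) ≠ 0 := by positivity
    rw [ds_rec hp hnp, pow_succ, ← mul_assoc, Nat.mul_mod_left,
      mul_comm (n * p ^ k) p, Nat.mul_div_cancel_left _ (by omega : 0 < p), ih]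
    simp

lemma ds_pos {p : ℕ} (hp : 1 < p) {n : ℕ} (hn : 0 < n) : 0 < digitSum p n := by
  induction n using Nat.strong_induction_on with
  | _ n ih =>
  rw [ds_rec hp (by omega)]
  rcases Nat.eq_zero_or_pos (n % p) with h | h
  · have hd : 0 < n / p := Nat.div_pos (by
      rcases Nat.lt_or_ge n p with h' | h'
      · have := Nat.mod_eq_of_lt h'; omega
      · exact h') (by omega)
    have := ih (n / p) (Nat.div_lt_self hn hp) hd
    omega
  · omega

lemma ds_mul_le {p : ℕ} (hp : 1 < p) (x y : ℕ) :
    digitSum p (x * y) ≤ digitSum p x * digitSum p y := by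
  induction y using Nat.strong_induction_on with
  | _ y ih =>
  rcases Nat.eq_zero_or_pos y with hy | hy
  · simp [hy, digitSum]
  have h1 : x * y = x * (y % p) + x * (y / p) * p := by
    conv_lhs => rw [← Nat.div_add_mod y p]
    ring
  have h2 : digitSum p (x * (y / p) * p) = digitSum p (x * (y / p)) := by
    have := ds_mul_pow hp (x * (y / p)) 1
    simpa using this
  calc digitSum p (x * y) ≤ digitSum p (x * (y % p)) + digitSum p (x * (y / p) * p) := by
        rw [h1]; exact ds_add_le hp _ _
    _ ≤ (y % p) * digitSum p x + digitSum p x * digitSum p (y / p) := by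
        rw [h2]
        have ha : digitSum p (x * (y % p)) ≤ (y % p) * digitSum p x := by
          rw [mul_comm x]; exact ds_smul_le hp _ _
        have hb := ih (y / p) (Nat.div_lt_self hy hp)
        omega
    _ = digitSum p x * ((y % p) + digitSum p (y / p)) := by ring
    _ = digitSum p x * digitSum p y := by rw [← ds_rec hp (by omega)]

lemma ds_lt_self {p : ℕ} (hp : 1 < p) {n : ℕ} (hn : p ≤ n) : digitSum p n < n := by
  rw [ds_rec hp (by omega)]
  have h1 : 0 < n / p := Nat.div_pos hn (by omega)
  have h2 := Nat.div_add_mod n p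
  have h3 : 2 * (n / p) ≤ p * (n / p) := Nat.mul_le_mul_right _ hp
  have h4 := ds_le_self p (n / p)
  omega

lemma geom_sum_p {p : ℕ} (hp : 1 < p) (a : ℕ) :
    ∑ j ∈ Finset.range a, (p - 1) * p ^ j = p ^ a - 1 := by
  induction a with
  | zero => simp
  | succ a ih =>
    rw [Finset.sum_range_succ, ih, pow_succ]
    have h1 : 1 ≤ p ^ a := Nat.one_le_pow _ _ (by omega)
    have h2 : (p - 1) * p ^ a = p ^ a * p - p ^ a := by
      rw [Nat.sub_mul, one_mul, mul_comm]
    have h3 : p ^ a ≤ p ^ a * p := Nat.le_mul_of_pos_right _ (by omega)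
    omega


/-- `IsRepr p a S N m` : `N` can be written as a sum of `m` coins (with repetition)
from the coin set `{i * p^j : i ∈ S, 0 ≤ j ≤ a-1}`. -/
def IsRepr (p a : ℕ) (S : Finset ℕ) (N m : ℕ) : Prop :=
  ∃ t : ℕ → ℕ → ℕ,
    (∑ i ∈ S, ∑ j ∈ Finset.range a, t i j * (i * p ^ j)) = N ∧
    (∑ i ∈ S, ∑ j ∈ Finset.range a, t i j) = m

/-- The minimal number of coins from the coin set needed to sum to `N`. -/
noncomputable def MC (p a : ℕ) (S : Finset ℕ) (N : ℕ) : ℕ :=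
  sInf {m | IsRepr p a S N m}

theorem keyLemma_carryFree_factorization_of_eq (p a : ℕ) (hp : p.Prime) (ha : 1 ≤ a)
    (S : Finset ℕ) (hS : ∀ i ∈ S, 0 < i ∧ Nat.Coprime i p)
    (ν : ℕ) (hν : ν ∈ S)
    (hmax : ∀ i ∈ S, i ≠ ν → digitSum p i < digitSum p ν)
    (N : ℕ) (heq : digitSum p ν * MC p a S N = digitSum p N) :
    ∃ w : ℕ, w < p ^ a ∧ N = ν * w ∧
      digitSum p N = digitSum p ν * digitSum p w := by
  have hp2 : 1 < p := hp.one_lt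
  have hν0 : 0 < ν := (hS ν hν).1
  have hdν : 0 < digitSum p ν := ds_pos hp2 hν0
  rcases Nat.eq_zero_or_pos N with hN0 | hN0
  · exact ⟨0, pow_pos (by omega) a, by simp [hN0], by simp [hN0, digitSum]⟩
  have hsN : 0 < digitSum p N := ds_pos hp2 hN0
  set m := MC p a S N with hm
  have hmpos : 0 < m := by
    rcases Nat.eq_zero_or_pos m with h | h
    · rw [h, mul_zero] at heq; omega
    · exact h
  have hne : {k | IsRepr p a S N k}.Nonempty := by
    by_contra h
    rw [Set.not_nonempty_iff_eq_empty] at h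
    have : m = 0 := by rw [hm, MC, h, Nat.sInf_empty]
    omega
  obtain ⟨t, htN, htm⟩ : IsRepr p a S N m := Nat.sInf_mem hne
  set dν := digitSum p ν with hdνdef
  set T : ℕ → ℕ := fun i => ∑ j ∈ Finset.range a, t i j with hT
  have h1 : digitSum p N ≤ ∑ i ∈ S, T i * digitSum p i := by
    rw [← htN]
    calc digitSum p (∑ i ∈ S, ∑ j ∈ Finset.range a, t i j * (i * p ^ j))
        ≤ ∑ i ∈ S, digitSum p (∑ j ∈ Finset.range a, t i j * (i * p ^ j)) := ds_sum_le hp2 _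
      _ ≤ ∑ i ∈ S, ∑ j ∈ Finset.range a, digitSum p (t i j * (i * p ^ j)) :=
          Finset.sum_le_sum fun i _ => ds_sum_le hp2 _
      _ ≤ ∑ i ∈ S, ∑ j ∈ Finset.range a, t i j * digitSum p i := by
          refine Finset.sum_le_sum fun i _ => Finset.sum_le_sum fun j _ => ?_
          have e : t i j * (i * p ^ j) = (t i j * i) * p ^ j := by ring
          rw [e, ds_mul_pow hp2]
          exact ds_smul_le hp2 _ _
      _ = ∑ i ∈ S, T i * digitSum p i := by
          refine Finset.sum_congr rfl fun i _ => ?_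
          rw [hT, Finset.sum_mul]
  have hle : ∀ i ∈ S, T i * digitSum p i ≤ T i * dν := by
    intro i hi
    rcases eq_or_ne i ν with rfl | hne'
    · exact le_rfl
    · exact Nat.mul_le_mul_left _ (le_of_lt (hmax i hi hne'))
  have h3 : (∑ i ∈ S, T i * dν) = m * dν := by
    rw [← Finset.sum_mul, ← htm]
  have hEq : ∑ i ∈ S, T i * digitSum p i = ∑ i ∈ S, T i * dν := by
    have h2 := Finset.sum_le_sum hle
    have hc : dν * m = m * dν := mul_comm _ _
    omega
  have hTzero : ∀ i ∈ S, i ≠ ν → T i = 0 := by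
    intro i hi hne'
    have := (Finset.sum_eq_sum_iff_of_le hle).mp hEq i hi
    rcases Nat.eq_zero_or_pos (T i) with h | h
    · exact h
    · exact absurd this (Nat.ne_of_lt (Nat.mul_lt_mul_of_pos_left (hmax i hi hne') h))
  have htzero : ∀ i ∈ S, i ≠ ν → ∀ j ∈ Finset.range a, t i j = 0 := by
    intro i hi hne' j hj
    exact (Finset.sum_eq_zero_iff).mp (hTzero i hi hne') j hj
  have hNν : N = ∑ j ∈ Finset.range a, t ν j * (ν * p ^ j) := by
    rw [← htN]
    exact Finset.sum_eq_single_of_mem ν hν fun i hi hne' =>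
      Finset.sum_eq_zero fun j hj => by rw [htzero i hi hne' j hj, zero_mul]
  have hmν : m = T ν := by
    rw [← htm]
    exact Finset.sum_eq_single_of_mem ν hν fun i hi hne' => hTzero i hi hne'
  set w := ∑ j ∈ Finset.range a, t ν j * p ^ j with hw
  have hTν : T ν = ∑ j ∈ Finset.range a, t ν j := rfl
  have hNw : N = ν * w := by
    rw [hNν, hw, Finset.mul_sum]
    exact Finset.sum_congr rfl fun j _ => by ring
  have hw_le : digitSum p w ≤ T ν := by
    rw [hTν]
    calc digitSum p w ≤ ∑ j ∈ Finset.range a, digitSum p (t ν j * p ^ j) := ds_sum_le hp2 _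
      _ ≤ ∑ j ∈ Finset.range a, t ν j := Finset.sum_le_sum fun j _ => by
            rw [ds_mul_pow hp2]; exact ds_le_self p _
  have h5 : digitSum p N ≤ dν * digitSum p w := by
    rw [hNw]; exact ds_mul_le hp2 ν w
  have hwm : digitSum p w = m := by
    have hub : digitSum p w ≤ m := by rw [hmν]; exact hw_le
    have hlb : m ≤ digitSum p w := Nat.le_of_mul_le_mul_left (heq.le.trans h5) hdν
    omega
  have hdsN : digitSum p N = dν * digitSum p w := by
    rw [hwm]; exact heq.symm
  refine ⟨w, ?_, hNw, hdsN⟩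
  have hchain : ∑ j ∈ Finset.range a, digitSum p (t ν j) = ∑ j ∈ Finset.range a, t ν j := by
    have hA : digitSum p w ≤ ∑ j ∈ Finset.range a, digitSum p (t ν j) := by
      calc digitSum p w ≤ ∑ j ∈ Finset.range a, digitSum p (t ν j * p ^ j) := ds_sum_le hp2 _
        _ = ∑ j ∈ Finset.range a, digitSum p (t ν j) :=
            Finset.sum_congr rfl fun j _ => ds_mul_pow hp2 _ _
    have hB : ∑ j ∈ Finset.range a, digitSum p (t ν j) ≤ ∑ j ∈ Finset.range a, t ν j :=
      Finset.sum_le_sum fun j _ => ds_le_self p _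
    omega
  have hdig : ∀ j ∈ Finset.range a, t ν j ≤ p - 1 := by
    intro j hj
    have hds := (Finset.sum_eq_sum_iff_of_le fun j _ => ds_le_self p (t ν j)).mp hchain j hj
    by_contra hcon
    have hple : p ≤ t ν j := by omega
    exact absurd hds (Nat.ne_of_lt (ds_lt_self hp2 hple))
  have hwb : w ≤ p ^ a - 1 := by
    rw [hw, ← geom_sum_p hp2 a]
    exact Finset.sum_le_sum fun j hj => Nat.mul_le_mul_right _ (hdig j hj)
  have hpa : 0 < p ^ a := pow_pos (by omega) a
  omega
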